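/- Let $X$ be a uniformly smooth Banach space with modulus of smoothness $\rho(u) \le \gamma u^q$ for some $1 < q \le 2$ and $\gamma > 0$, let ${\mathcal D}$ be a dictionary in $X$, and let $p = q/(q-1)$. Set $\varepsilon_n := K_1 \gamma^{1/q} n^{-1/p}$ for a fixed constant $K_1 > 0$. Then for any $f \in \operatorname{conv}({\mathcal D})$, the residuals $f_m$ of the Incremental Algorithm IA($\varepsilon$) applied to $f$ satisfy $\|f_m\| \le C(K_1) \gamma^{1/q} m^{-1/p}$ for all $m \ge 1$, with a constant $C(K_1)$ depending only on $K_1$. -/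

import Mathlib

/-- The modulus of smoothness of a normed space. -/
noncomputable def modSmooth (X : Type*) [NormedAddCommGroup X] [NormedSpace ℝ X] (u : ℝ) : ℝ :=
  sSup {r : ℝ | ∃ x y : X, ‖x‖ = 1 ∧ ‖y‖ = 1 ∧
    r = (‖x + u • y‖ + ‖x - u • y‖) / 2 - 1}

open Real

private lemma unit_norm {X : Type} [NormedAddCommGroup X] [NormedSpace ℝ X] {v : X} (hv : v ≠ 0) :
    ‖(‖v‖⁻¹ : ℝ) • v‖ = 1 := by
  rw [norm_smul, Real.norm_eq_abs, abs_of_nonneg (by positivity), inv_mul_cancel₀ (norm_ne_zero_iff.mpr hv)]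

private lemma modSmooth_bddAbove {X : Type} [NormedAddCommGroup X] [NormedSpace ℝ X] {u : ℝ}
    (hu : 0 < u) :
    BddAbove {r : ℝ | ∃ x y : X, ‖x‖ = 1 ∧ ‖y‖ = 1 ∧
      r = (‖x + u • y‖ + ‖x - u • y‖) / 2 - 1} := by
  refine ⟨u, fun r hr => ?_⟩
  obtain ⟨x, y, hx, hy, rfl⟩ := hr
  have h1 : ‖x + u • y‖ ≤ 1 + u := by
    calc ‖x + u • y‖ ≤ ‖x‖ + ‖u • y‖ := norm_add_le _ _
    _ = 1 + u := by rw [hx, norm_smul, Real.norm_eq_abs, abs_of_pos hu, hy, mul_one]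
  have h2 : ‖x - u • y‖ ≤ 1 + u := by
    calc ‖x - u • y‖ ≤ ‖x‖ + ‖u • y‖ := norm_sub_le _ _
    _ = 1 + u := by rw [hx, norm_smul, Real.norm_eq_abs, abs_of_pos hu, hy, mul_one]
  linarith

private lemma bern {q : ℝ} (hq1 : 1 < q) {n : ℕ} (hn : 1 ≤ n) :
    ((n : ℝ)) ^ ((1:ℝ)/q) ≤ ((n:ℝ)+1) ^ ((1:ℝ)/q) - (1/q) * ((n:ℝ)+1) ^ ((1:ℝ)/q - 1) := by
  have hq0 : (0:ℝ) < q := by linarith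
  have hn1 : (1:ℝ) ≤ (n:ℝ) := by exact_mod_cast hn
  set N : ℝ := (n:ℝ) + 1 with hN
  have hNpos : (0:ℝ) < N := by positivity
  have hNinv : N⁻¹ ≤ 1 := by
    rw [inv_le_one_iff₀]; right; linarith
  have hs : (-1:ℝ) ≤ -N⁻¹ := by linarith
  have key : (1 + (-N⁻¹)) ^ ((1:ℝ)/q) ≤ 1 + (1/q) * (-N⁻¹) :=
    rpow_one_add_le_one_add_mul_self hs (by positivity) (by rw [div_le_one hq0]; linarith)
  have hNn : (n:ℝ) = N * (1 + -N⁻¹) := by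
    field_simp [hN]
    linarith
  have h1N : (0:ℝ) ≤ 1 + -N⁻¹ := by
    have : N⁻¹ ≤ 1 := hNinv
    linarith
  calc (n:ℝ) ^ ((1:ℝ)/q) = (N * (1 + -N⁻¹)) ^ ((1:ℝ)/q) := by rw [← hNn]
    _ = N ^ ((1:ℝ)/q) * (1 + -N⁻¹) ^ ((1:ℝ)/q) := Real.mul_rpow hNpos.le h1N
    _ ≤ N ^ ((1:ℝ)/q) * (1 + (1/q) * (-N⁻¹)) :=
        mul_le_mul_of_nonneg_left key (Real.rpow_nonneg hNpos.le _)
    _ = N ^ ((1:ℝ)/q) - (1/q) * (N ^ ((1:ℝ)/q) * N⁻¹) := by ring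
    _ = N ^ ((1:ℝ)/q) - (1/q) * N ^ ((1:ℝ)/q - 1) := by
        rw [Real.rpow_sub hNpos, Real.rpow_one]; ring

private lemma smooth_key {X : Type} [NormedAddCommGroup X] [NormedSpace ℝ X]
    {γ q : ℝ} (hγ : 0 < γ) (hq : 1 < q)
    (hmod : ∀ u : ℝ, 0 < u → modSmooth X u ≤ γ * u ^ q)
    (h g : X) (F : X →L[ℝ] ℝ) (hh : h ≠ 0) (hF1 : ‖F‖ = 1) (hFh : F h = ‖h‖) :
    ‖h + g‖ ≤ ‖h‖ + F g + 2 * γ * ‖g‖ ^ q * ‖h‖ ^ (1 - q) := by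
  have hq0 : (0:ℝ) < q := by linarith
  have hhp : (0:ℝ) < ‖h‖ := norm_pos_iff.mpr hh
  by_cases hg : g = 0
  · subst hg
    rw [norm_zero, Real.zero_rpow (ne_of_gt hq0)]
    have h1 : (0:ℝ) ≤ ‖h‖ ^ (1 - q) := Real.rpow_nonneg hhp.le _
    simp only [add_zero, map_zero]
    nlinarith
  · have hgp : (0:ℝ) < ‖g‖ := norm_pos_iff.mpr hg
    set u : ℝ := ‖g‖ / ‖h‖ with hu
    have hup : (0:ℝ) < u := div_pos hgp hhp
    have hug : u • ((‖g‖⁻¹ : ℝ) • g) = (‖h‖⁻¹ : ℝ) • g := by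
      rw [smul_smul, hu]
      congr 1
      field_simp
    have e1 : (‖h‖⁻¹ : ℝ) • h + u • ((‖g‖⁻¹ : ℝ) • g) = (‖h‖⁻¹ : ℝ) • (h + g) := by
      rw [hug, smul_add]
    have e2 : (‖h‖⁻¹ : ℝ) • h - u • ((‖g‖⁻¹ : ℝ) • g) = (‖h‖⁻¹ : ℝ) • (h - g) := by
      rw [hug, smul_sub]
    have hmem : (‖h + g‖ + ‖h - g‖) / (2 * ‖h‖) - 1 ∈ {r : ℝ | ∃ x y : X, ‖x‖ = 1 ∧ ‖y‖ = 1 ∧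
        r = (‖x + u • y‖ + ‖x - u • y‖) / 2 - 1} := by
      refine ⟨(‖h‖⁻¹ : ℝ) • h, (‖g‖⁻¹ : ℝ) • g, unit_norm hh, unit_norm hg, ?_⟩
      rw [e1, e2, norm_smul, norm_smul, Real.norm_eq_abs, abs_of_nonneg (by positivity)]
      field_simp
    have hle : (‖h + g‖ + ‖h - g‖) / (2 * ‖h‖) - 1 ≤ γ * u ^ q :=
      le_trans (le_csSup (modSmooth_bddAbove hup) hmem) (hmod u hup)
    have hsum : ‖h + g‖ + ‖h - g‖ ≤ 2 * ‖h‖ + 2 * ‖h‖ * (γ * u ^ q) := by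
      have h2 : (0:ℝ) < 2 * ‖h‖ := by positivity
      rw [div_sub' (ne_of_gt h2), div_le_iff₀ h2] at hle
      nlinarith
    have hFlb : ‖h‖ - F g ≤ ‖h - g‖ := by
      have : F (h - g) ≤ ‖F‖ * ‖h - g‖ :=
        le_trans (le_abs_self _) (F.le_opNorm _)
      rw [map_sub, hFh, hF1, one_mul] at this
      linarith
    have huq : 2 * ‖h‖ * (γ * u ^ q) = 2 * γ * ‖g‖ ^ q * ‖h‖ ^ (1 - q) := by
      rw [hu, Real.div_rpow hgp.le hhp.le, Real.rpow_sub hhp, Real.rpow_one]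
      have : ‖h‖ ^ q ≠ 0 := ne_of_gt (Real.rpow_pos_of_pos hhp q)
      field_simp
    rw [huq] at hsum
    linarith

set_option maxHeartbeats 1000000 in
/-- Rate of convergence of the Incremental Algorithm IA(ε) with schedule
`ε n = K₁ γ^(1/q) n^(-1/p)`, `p = q/(q-1)`, on the closed convex hull of a dictionary. -/
theorem stmt_18 (K1 : ℝ) (hK1 : 0 < K1) :
    ∃ C : ℝ, 0 < C ∧
      ∀ (X : Type) [NormedAddCommGroup X] [NormedSpace ℝ X] [CompleteSpace X],
      ∀ (γ q p : ℝ), 0 < γ → 1 < q → q ≤ 2 → p = q / (q - 1) →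
      (∀ u : ℝ, 0 < u → modSmooth X u ≤ γ * u ^ q) →
      ∀ (D : Set X), (∀ g ∈ D, ‖g‖ ≤ 1) →
      ∀ f : X, f ∈ closure (convexHull ℝ D) →
      ∀ (φ G fres : ℕ → X) (F : ℕ → (X →L[ℝ] ℝ)),
      fres 0 = f → G 0 = 0 →
      (∀ m : ℕ, ‖F m‖ = 1 ∧ F m (fres m) = ‖fres m‖) →
      (∀ m : ℕ, 1 ≤ m →
        φ m ∈ D ∧
        F (m - 1) (φ m - f) ≥ -(K1 * γ ^ (1 / q) * (m : ℝ) ^ (-(1 / p))) ∧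
        G m = (1 - 1 / (m : ℝ)) • G (m - 1) + ((m : ℝ))⁻¹ • φ m ∧
        fres m = f - G m) →
      ∀ m : ℕ, 1 ≤ m → ‖fres m‖ ≤ C * γ ^ (1 / q) * (m : ℝ) ^ (-(1 / p)) := by
  refine ⟨2 * K1 + 16, by linarith, ?_⟩
  intro X _ _ _ γ q p hγ hq1 hq2 hp hmod D hD f hf φ G fres F hf0 hG0 hF hstep
  set C : ℝ := 2 * K1 + 16 with hC
  have hCpos : (0:ℝ) < C := by rw [hC]; linarith
  have hq0 : (0:ℝ) < q := by linarith
  have hq1' : q - 1 ≠ 0 := by intro h; linarith [sub_eq_zero.mp h]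
  have hpinv : -(1/p) = 1/q - 1 := by
    rw [hp]
    field_simp
    ring
  -- a unit vector exists
  obtain ⟨hF0, -⟩ := hF 0
  have hFne : F 0 ≠ 0 := by
    intro h
    rw [h, norm_zero] at hF0
    norm_num at hF0
  obtain ⟨v, hv⟩ : ∃ v : X, F 0 v ≠ 0 := by
    by_contra hcon
    push_neg at hcon
    exact hFne (ContinuousLinearMap.ext fun v => by simp [hcon v])
  have hvne : v ≠ 0 := by
    intro h
    apply hv
    rw [h, map_zero]
  -- γ ≥ 1/4
  have h2q4 : (2:ℝ) ^ q ≤ 4 := by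
    calc (2:ℝ) ^ q ≤ (2:ℝ) ^ (2:ℝ) := Real.rpow_le_rpow_of_exponent_le one_le_two hq2
    _ = 4 := by
        rw [show (2:ℝ) = ((2:ℕ):ℝ) by norm_num, Real.rpow_natCast]
        norm_num
  have hγ4 : (1:ℝ)/4 ≤ γ := by
    set e : X := (‖v‖⁻¹ : ℝ) • v with he'
    have he : ‖e‖ = 1 := unit_norm hvne
    have hmem : (1:ℝ) ∈ {r : ℝ | ∃ x y : X, ‖x‖ = 1 ∧ ‖y‖ = 1 ∧
        r = (‖x + (2:ℝ) • y‖ + ‖x - (2:ℝ) • y‖) / 2 - 1} := by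
      refine ⟨e, e, he, he, ?_⟩
      have h1 : ‖e + (2:ℝ) • e‖ = 3 := by
        have h' : e + (2:ℝ) • e = (3:ℝ) • e := by module
        rw [h', norm_smul, he, mul_one]
        norm_num
      have h2 : ‖e - (2:ℝ) • e‖ = 1 := by
        have h' : e - (2:ℝ) • e = (-1:ℝ) • e := by module
        rw [h', norm_smul, he, mul_one]
        norm_num
      rw [h1, h2]
      norm_num
    have h1 : (1:ℝ) ≤ modSmooth X 2 := le_csSup (modSmooth_bddAbove two_pos) hmem
    have h2 : modSmooth X 2 ≤ γ * 2 ^ q := hmod 2 two_pos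
    nlinarith
  have hγq : (1:ℝ)/4 ≤ γ ^ ((1:ℝ)/q) := by
    have hql : (1:ℝ)/q ≤ 1 := by rw [div_le_one hq0]; linarith
    calc (1/4 : ℝ) = (1/4 : ℝ) ^ (1:ℝ) := (Real.rpow_one _).symm
    _ ≤ (1/4 : ℝ) ^ ((1:ℝ)/q) :=
        Real.rpow_le_rpow_of_exponent_ge (by norm_num) (by norm_num) hql
    _ ≤ γ ^ ((1:ℝ)/q) := Real.rpow_le_rpow (by norm_num) hγ4 (by positivity)
  have hγqpos : (0:ℝ) < γ ^ ((1:ℝ)/q) := Real.rpow_pos_of_pos hγ _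
  -- f bounded
  have hfb : ‖f‖ ≤ 1 := by
    have hsub : convexHull ℝ D ⊆ Metric.closedBall (0:X) 1 :=
      convexHull_min (fun g hg => by
        rw [Metric.mem_closedBall, dist_zero_right]; exact hD g hg)
        (convex_closedBall _ _)
    have hfc : f ∈ Metric.closedBall (0:X) 1 :=
      closure_minimal hsub Metric.isClosed_closedBall hf
    rwa [Metric.mem_closedBall, dist_zero_right] at hfc
  have hφb : ∀ k : ℕ, 1 ≤ k → ‖f - φ k‖ ≤ 2 := by
    intro k hk
    have := hD (φ k) (hstep k hk).1
    calc ‖f - φ k‖ ≤ ‖f‖ + ‖φ k‖ := norm_sub_le _ _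
    _ ≤ 2 := by linarith
  have hres : ∀ k : ℕ, fres k = f - G k := by
    intro k
    rcases Nat.eq_zero_or_pos k with h | h
    · subst h; rw [hf0, hG0, sub_zero]
    · exact (hstep k h).2.2.2
  have hrec : ∀ k : ℕ, 1 ≤ k →
      ((k:ℝ)) • fres k = ((k:ℝ) - 1) • fres (k-1) + (f - φ k) := by
    intro k hk
    have hk0 : (k:ℝ) ≠ 0 := Nat.cast_ne_zero.mpr (by omega)
    obtain ⟨-, -, hGk, hfk⟩ := hstep k hk
    rw [hfk, hres (k-1), hGk]
    match_scalars <;> field_simp <;> ring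
  -- main induction
  have main : ∀ k : ℕ, 1 ≤ k → (k:ℝ) * ‖fres k‖ ≤ C * γ ^ ((1:ℝ)/q) * (k:ℝ) ^ ((1:ℝ)/q) := by
    intro k hk
    induction k, hk using Nat.le_induction with
    | base =>
      have h1 : fres 1 = f - φ 1 := by
        have := hrec 1 le_rfl
        simpa using this
      rw [h1]
      have h2 : ‖f - φ 1‖ ≤ 2 := hφb 1 le_rfl
      rw [Nat.cast_one, one_mul, Real.one_rpow, mul_one]
      nlinarith
    | succ n hn ih =>
      set Nr : ℝ := (n:ℝ) + 1 with hNr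
      have hNr1 : (1:ℝ) ≤ Nr := by
        have : (1:ℝ) ≤ (n:ℝ) := by exact_mod_cast hn
        linarith
      have hNrpos : (0:ℝ) < Nr := by linarith
      have hNrq1 : (1:ℝ) ≤ Nr ^ ((1:ℝ)/q) := Real.one_le_rpow hNr1 (by positivity)
      have hcast : ((n+1 : ℕ):ℝ) = Nr := by push_cast; rw [hNr]
      set g : X := f - φ (n+1) with hg'
      have hgb : ‖g‖ ≤ 2 := hφb (n+1) (by omega)
      have hrecN : ((n+1:ℕ):ℝ) • fres (n+1) = ((n:ℝ)) • fres n + g := by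
        have h := hrec (n+1) (by omega)
        rw [Nat.add_sub_cancel] at h
        have hc2 : ((n+1:ℕ):ℝ) - 1 = (n:ℝ) := by push_cast; ring
        rw [h, hc2]
      have hLHS : Nr * ‖fres (n+1)‖ = ‖((n:ℝ)) • fres n + g‖ := by
        rw [← hrecN, hcast, norm_smul, Real.norm_eq_abs, abs_of_pos hNrpos]
      have ha'eq : ‖((n:ℝ)) • fres n‖ = (n:ℝ) * ‖fres n‖ := by
        rw [norm_smul, Real.norm_eq_abs, abs_of_nonneg (Nat.cast_nonneg n)]
      rw [hcast]
      by_cases hA : (n:ℝ) * ‖fres n‖ ≤ (C/2) * γ ^ ((1:ℝ)/q) * Nr ^ ((1:ℝ)/q)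
      · -- small residual: use triangle inequality
        have h1 : (2:ℝ) ≤ (C/2) * γ ^ ((1:ℝ)/q) * Nr ^ ((1:ℝ)/q) := by
          have hab : (1:ℝ)/4 ≤ γ ^ ((1:ℝ)/q) * Nr ^ ((1:ℝ)/q) := by
            calc (1:ℝ)/4 ≤ γ ^ ((1:ℝ)/q) := hγq
            _ ≤ γ ^ ((1:ℝ)/q) * Nr ^ ((1:ℝ)/q) :=
                le_mul_of_one_le_right hγqpos.le hNrq1
          calc (2:ℝ) ≤ (C/2) * (1/4) := by rw [hC]; linarith
          _ ≤ (C/2) * (γ ^ ((1:ℝ)/q) * Nr ^ ((1:ℝ)/q)) := by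
              apply mul_le_mul_of_nonneg_left hab (by linarith)
          _ = (C/2) * γ ^ ((1:ℝ)/q) * Nr ^ ((1:ℝ)/q) := by ring
        rw [hLHS]
        calc ‖((n:ℝ)) • fres n + g‖ ≤ ‖((n:ℝ)) • fres n‖ + ‖g‖ := norm_add_le _ _
        _ ≤ (C/2) * γ ^ ((1:ℝ)/q) * Nr ^ ((1:ℝ)/q) + 2 := by rw [ha'eq]; linarith
        _ ≤ C * γ ^ ((1:ℝ)/q) * Nr ^ ((1:ℝ)/q) := by linarith
      · push_neg at hA
        have hbpos : (0:ℝ) < (C/2) * γ ^ ((1:ℝ)/q) * Nr ^ ((1:ℝ)/q) := by positivity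
        have hfnne : ((n:ℝ)) • fres n ≠ 0 := by
          intro h0
          rw [← ha'eq, h0, norm_zero] at hA
          linarith
        obtain ⟨hFn1, hFn2⟩ := hF n
        have hFh : F n (((n:ℝ)) • fres n) = ‖((n:ℝ)) • fres n‖ := by
          rw [map_smul, smul_eq_mul, hFn2, ha'eq]
        have key := smooth_key hγ hq1 hmod (((n:ℝ)) • fres n) g (F n) hfnne hFn1 hFh
        -- ε bound
        have hε := (hstep (n+1) (by omega)).2.1
        rw [Nat.add_sub_cancel] at hε
        have hFg : F n g ≤ K1 * γ ^ ((1:ℝ)/q) * Nr ^ ((1:ℝ)/q - 1) := by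
          have he1 : F n g = -(F n (φ (n+1) - f)) := by
            rw [hg', map_sub, map_sub]; ring
          rw [he1]
          have := hε
          rw [hpinv, hcast] at this
          have h1q : (1:ℝ)/q = 1/q := rfl
          linarith [this]
        -- smoothness term bound
        have hbase : (C/2) * γ ^ ((1:ℝ)/q) * Nr ^ ((1:ℝ)/q) ≤ ‖((n:ℝ)) • fres n‖ := by
          rw [ha'eq]; exact hA.le
        have hhq : ‖((n:ℝ)) • fres n‖ ^ (1-q) ≤
            ((C/2) * γ ^ ((1:ℝ)/q) * Nr ^ ((1:ℝ)/q)) ^ (1-q) :=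
          Real.rpow_le_rpow_of_nonpos hbpos hbase (by linarith)
        have hsplit : ((C/2) * γ ^ ((1:ℝ)/q) * Nr ^ ((1:ℝ)/q)) ^ (1-q) ≤
            γ ^ ((1:ℝ)/q - 1) * Nr ^ ((1:ℝ)/q - 1) := by
          rw [Real.mul_rpow (by positivity) (by positivity),
              Real.mul_rpow (by positivity) (by positivity)]
          have e1 : (γ ^ ((1:ℝ)/q)) ^ (1-q) = γ ^ ((1:ℝ)/q - 1) := by
            rw [← Real.rpow_mul hγ.le]
            congr 1
            field_simp
          have e2 : (Nr ^ ((1:ℝ)/q)) ^ (1-q) = Nr ^ ((1:ℝ)/q - 1) := by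
            rw [← Real.rpow_mul hNrpos.le]
            congr 1
            field_simp
          have e3 : (C/2 : ℝ) ^ (1-q) ≤ 1 :=
            Real.rpow_le_one_of_one_le_of_nonpos (by rw [hC]; linarith) (by linarith)
          rw [e1, e2]
          have hp1 : (0:ℝ) < γ ^ ((1:ℝ)/q - 1) := Real.rpow_pos_of_pos hγ _
          have hp2 : (0:ℝ) < Nr ^ ((1:ℝ)/q - 1) := Real.rpow_pos_of_pos hNrpos _
          calc (C/2:ℝ) ^ (1-q) * γ ^ ((1:ℝ)/q - 1) * Nr ^ ((1:ℝ)/q - 1)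
              ≤ 1 * γ ^ ((1:ℝ)/q - 1) * Nr ^ ((1:ℝ)/q - 1) := by
                apply mul_le_mul_of_nonneg_right _ hp2.le
                exact mul_le_mul_of_nonneg_right e3 hp1.le
          _ = γ ^ ((1:ℝ)/q - 1) * Nr ^ ((1:ℝ)/q - 1) := by rw [one_mul]
        have hgq : ‖g‖ ^ q ≤ 4 := by
          calc ‖g‖ ^ q ≤ (2:ℝ) ^ q := Real.rpow_le_rpow (norm_nonneg _) hgb hq0.le
          _ ≤ 4 := h2q4
        have hterm : 2 * γ * ‖g‖ ^ q * ‖((n:ℝ)) • fres n‖ ^ (1-q) ≤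
            8 * γ ^ ((1:ℝ)/q) * Nr ^ ((1:ℝ)/q - 1) := by
          have hc1 : ‖((n:ℝ)) • fres n‖ ^ (1-q) ≤ γ ^ ((1:ℝ)/q - 1) * Nr ^ ((1:ℝ)/q - 1) :=
            le_trans hhq hsplit
          have hnn : (0:ℝ) ≤ ‖((n:ℝ)) • fres n‖ ^ (1-q) := Real.rpow_nonneg (norm_nonneg _) _
          have hmulγ : γ * γ ^ ((1:ℝ)/q - 1) = γ ^ ((1:ℝ)/q) := by
            have hadd : γ ^ (1:ℝ) * γ ^ ((1:ℝ)/q - 1) = γ ^ ((1:ℝ) + ((1:ℝ)/q - 1)) :=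
              (Real.rpow_add hγ _ _).symm
            rw [Real.rpow_one] at hadd
            rw [hadd]
            congr 1
            ring
          calc 2 * γ * ‖g‖ ^ q * ‖((n:ℝ)) • fres n‖ ^ (1-q)
              ≤ 2 * γ * 4 * (γ ^ ((1:ℝ)/q - 1) * Nr ^ ((1:ℝ)/q - 1)) := by
                have hgqnn : (0:ℝ) ≤ ‖g‖ ^ q := Real.rpow_nonneg (norm_nonneg _) _
                have s1 : 2 * γ * ‖g‖ ^ q ≤ 2 * γ * 4 :=
                  mul_le_mul_of_nonneg_left hgq (by positivity)
                exact mul_le_mul s1 hc1 hnn (by positivity)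
          _ = 8 * (γ * γ ^ ((1:ℝ)/q - 1)) * Nr ^ ((1:ℝ)/q - 1) := by ring
          _ = 8 * γ ^ ((1:ℝ)/q) * Nr ^ ((1:ℝ)/q - 1) := by rw [hmulγ]
        -- Bernoulli step
        have hbern : (n:ℝ) ^ ((1:ℝ)/q) ≤ Nr ^ ((1:ℝ)/q) - (1/q) * Nr ^ ((1:ℝ)/q - 1) := by
          have := bern hq1 hn
          rw [hNr]
          convert this using 3 <;> norm_num
        have hNrq1' : (0:ℝ) < Nr ^ ((1:ℝ)/q - 1) := Real.rpow_pos_of_pos hNrpos _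
        have hCq : (K1 + 8 : ℝ) ≤ C * (1/q) := by
          have h1 : C / 2 ≤ C * (1/q) := by
            rw [div_eq_mul_inv]
            apply mul_le_mul_of_nonneg_left _ hCpos.le
            rw [one_div]
            exact inv_anti₀ hq0 hq2
          rw [hC] at h1 ⊢
          linarith
        rw [hLHS]
        calc ‖((n:ℝ)) • fres n + g‖
            ≤ ‖((n:ℝ)) • fres n‖ + F n g + 2 * γ * ‖g‖ ^ q * ‖((n:ℝ)) • fres n‖ ^ (1-q) := key
        _ ≤ (n:ℝ) * ‖fres n‖ + K1 * γ ^ ((1:ℝ)/q) * Nr ^ ((1:ℝ)/q - 1)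
              + 8 * γ ^ ((1:ℝ)/q) * Nr ^ ((1:ℝ)/q - 1) := by
            linarith [hFg, hterm, ha'eq]
        _ ≤ C * γ ^ ((1:ℝ)/q) * (n:ℝ) ^ ((1:ℝ)/q)
              + (K1 + 8) * (γ ^ ((1:ℝ)/q) * Nr ^ ((1:ℝ)/q - 1)) := by linarith [ih]
        _ ≤ C * γ ^ ((1:ℝ)/q) * (Nr ^ ((1:ℝ)/q) - (1/q) * Nr ^ ((1:ℝ)/q - 1))
              + C * (1/q) * (γ ^ ((1:ℝ)/q) * Nr ^ ((1:ℝ)/q - 1)) := by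
            have hc1 : C * γ ^ ((1:ℝ)/q) * (n:ℝ) ^ ((1:ℝ)/q)
                ≤ C * γ ^ ((1:ℝ)/q) * (Nr ^ ((1:ℝ)/q) - (1/q) * Nr ^ ((1:ℝ)/q - 1)) :=
              mul_le_mul_of_nonneg_left hbern (by positivity)
            have hc2 : (K1 + 8) * (γ ^ ((1:ℝ)/q) * Nr ^ ((1:ℝ)/q - 1))
                ≤ C * (1/q) * (γ ^ ((1:ℝ)/q) * Nr ^ ((1:ℝ)/q - 1)) :=
              mul_le_mul_of_nonneg_right hCq (by positivity)
            linarith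
        _ = C * γ ^ ((1:ℝ)/q) * Nr ^ ((1:ℝ)/q) := by ring
  -- conclude
  intro m hm
  have hm0 : (0:ℝ) < (m:ℝ) := by exact_mod_cast Nat.lt_of_lt_of_le Nat.zero_lt_one hm
  have h := main m hm
  rw [hpinv]
  have hrw : (m:ℝ) ^ ((1:ℝ)/q - 1) * (m:ℝ) = (m:ℝ) ^ ((1:ℝ)/q) := by
    rw [Real.rpow_sub hm0, Real.rpow_one, div_mul_cancel₀ _ (ne_of_gt hm0)]
  rw [← mul_le_mul_iff_of_pos_right hm0]
  calc ‖fres m‖ * (m:ℝ) = (m:ℝ) * ‖fres m‖ := by ring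
  _ ≤ C * γ ^ ((1:ℝ)/q) * (m:ℝ) ^ ((1:ℝ)/q) := h
  _ = C * γ ^ ((1:ℝ)/q) * ((m:ℝ) ^ ((1:ℝ)/q - 1) * (m:ℝ)) := by rw [hrw]
  _ = C * γ ^ (1/q) * (m:ℝ) ^ (1/q - 1) * (m:ℝ) := by ring
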